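/- arXiv:1402.5361 — 3 statements merged into one kernel-verified Lean document; each statement's English description precedes it below -/
import Mathlib

section
/- Let d ≥ s ≥ 2 and let h be a finite O-sequence of multiplicity d and length s with h ≠ (1, d-s+1, 1^{s-2}). Let i = max{1 ≤ j ≤ s-1 : h_j > 1}; then i ≥ 2 and the sequence h - e_i + e_1, obtained by decreasing h_i by 1 and increasing h_1 by 1, is a finite O-sequence of multiplicity d and length s. Moreover, iterating this operation starting from any finite O-sequence of multiplicity d and length s reaches (1, d-s+1, 1^{s-2}) after finitely many steps. -/
/-- The Macaulay bound `a^⟨t⟩`: if `a = C(k_t,t) + C(k_{t-1},t-1) + ⋯ + C(k_j,j)` is the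
binomial expansion of `a` in base `t`, then `a^⟨t⟩ = C(k_t+1,t+1) + ⋯ + C(k_j+1,j+1)`.
Computed greedily; `mac t a = a^⟨t⟩` for `t ≥ 1`. -/
def mac : ℕ → ℕ → ℕ
  | 0, _ => 0
  | t+1, a =>
    if a = 0 then 0
    else
      Nat.choose (Nat.findGreatest (fun n => Nat.choose n (t+1) ≤ a) (a + t + 1) + 1) (t+2) +
        mac t (a - Nat.choose (Nat.findGreatest (fun n => Nat.choose n (t+1) ≤ a) (a + t + 1)) (t+1))

/-- `h : ℕ → ℕ` is a finite O-sequence of length `s`: `h 0 = 1`, the entries `h 0, …, h (s-1)`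
are positive, entries from index `s` on are zero, and `h (t+1) ≤ (h t)^⟨t⟩` for all `t ≥ 1`. -/
def IsOSeq (h : ℕ → ℕ) (s : ℕ) : Prop :=
  h 0 = 1 ∧ (∀ i, 0 < h i ↔ i < s) ∧ ∀ t, 1 ≤ t → h (t + 1) ≤ mac t (h t)

/-- The multiplicity `e(h) = h_0 + ⋯ + h_{s-1}` of a finite O-sequence of length `s`. -/
def mult (h : ℕ → ℕ) (s : ℕ) : ℕ := ∑ i ∈ Finset.range s, h i

/-- The genus `g(h) = Σ_{j=2}^{s-1} (j-1)·h_j` of a finite O-sequence of length `s`. -/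
def genus (h : ℕ → ℕ) (s : ℕ) : ℕ := ∑ j ∈ Finset.range s, (j - 1) * h j

/-- The sequence obtained from `h` by increasing the `i`-th entry by `1`, i.e. `h + e_i`. -/
def addE (h : ℕ → ℕ) (i : ℕ) : ℕ → ℕ := fun j => if j = i then h j + 1 else h j

/-- The sequence obtained from `h` by decreasing the `i`-th entry by `1`, i.e. `h - e_i`. -/
def subE (h : ℕ → ℕ) (i : ℕ) : ℕ → ℕ := fun j => if j = i then h j - 1 else h j

/-- The total order on finite O-sequences of the same length: `oLT h k` iff `h_ℓ < k_ℓ`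
where `ℓ = max{ j : h_j ≠ k_j }`. -/
def oLT (h k : ℕ → ℕ) : Prop := ∃ ℓ, h ℓ < k ℓ ∧ ∀ j, ℓ < j → h j = k j

/-- The set of genera of finite O-sequences of multiplicity `d` and length `s`. -/
def genusSet (d s : ℕ) : Set ℕ := {g | ∃ h, IsOSeq h s ∧ mult h s = d ∧ genus h s = g}

/-- `G_d`: the set of genera of finite O-sequences of multiplicity `d` (of any length). -/
def GSet (d : ℕ) : Set ℕ := {g | ∃ h s, IsOSeq h s ∧ mult h s = d ∧ genus h s = g}

/-- `g` is a gap in `R_d = [0, C(d-1,2)]`: it lies in the range but is not the genus of any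
finite O-sequence of multiplicity `d`. -/
def IsGap (d g : ℕ) : Prop :=
  g ≤ Nat.choose (d - 1) 2 ∧ ∀ h s, IsOSeq h s → mult h s = d → genus h s ≠ g

/-- The O-sequence `(1, d-s+1, 1^{s-2})`, minimal in `𝒢_d^s`. -/
def minSeq (d s : ℕ) : ℕ → ℕ :=
  fun j => if j = 0 then 1 else if j = 1 then d - s + 1 else if j < s then 1 else 0

/-- The O-sequence `(1, 2^{d-s}, 1^{2s-d-1})`, maximal in `𝒢_d^s`. -/
def maxSeq (d s : ℕ) : ℕ → ℕ :=
  fun j => if j = 0 then 1 else if j ≤ d - s then 2 else if j < s then 1 else 0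

/-- The O-sequence `(1, d-1)`. -/
def twoSeq (d : ℕ) : ℕ → ℕ := fun j => if j = 0 then 1 else if j = 1 then d - 1 else 0

/-- The operation `h ↦ h - e_{s-1} + e_1` on a sequence of length `s`. -/
def downUp (h : ℕ → ℕ) (s : ℕ) : ℕ → ℕ :=
  fun j => if j = s - 1 then h j - 1 else if j = 1 then h j + 1 else h j

/-- The largest index `1 ≤ j ≤ s-1` with `h j > 1` (and `0` if there is none). -/
def topIdx (h : ℕ → ℕ) (s : ℕ) : ℕ := Nat.findGreatest (fun j => 1 < h j) (s - 1)

/-- The operation `h ↦ h - e_i + e_1` where `i = topIdx h s`. -/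
def shiftDown (h : ℕ → ℕ) (s : ℕ) : ℕ → ℕ :=
  fun j => if j = topIdx h s then h j - 1 else if j = 1 then h j + 1 else h j

/-- Auxiliary list `[m_n, m_{n-1}, …, m_1]` for the recursively defined sequence `(m_d)`. -/
def mListAux : ℕ → List ℕ
  | 0 => []
  | n+1 =>
    let prev := mListAux n
    let newVal :=
      if n = 0 then 0
      else
        (List.range' 2 (n - 1)).foldl
          (fun M k =>
            if Nat.choose k 2 - 1 ≤ M then max M (prev.getD (k - 1) 0 + Nat.choose k 2) else M)
          (prev.getD 0 0)
    newVal :: prev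

/-- The sequence `(m_d)_{d ≥ 1}`: `m_1 = 0` and, for `d ≥ 2`, `m_d` is obtained from
`M := m_{d-1}` by running over `k = 2, …, d-1` and replacing `M` by
`max M (m_{d-k} + C(k,2))` whenever `C(k,2) - 1 ≤ M`. -/
def mSeq (d : ℕ) : ℕ := (mListAux d).getD 0 0

lemma mac_one (a : ℕ) : mac 1 a = Nat.choose (a + 1) 2 := by
  rcases Nat.eq_zero_or_pos a with rfl | ha
  · simp [mac]
  · have hg : Nat.findGreatest (fun n => Nat.choose n (0+1) ≤ a) (a + 0 + 1) = a := by
      rw [Nat.findGreatest_eq_iff]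
      refine ⟨by omega, fun _ => by simp, fun n hn _ => by simp; omega⟩
    rw [show (1:ℕ) = 0 + 1 from rfl, mac, if_neg (by omega), hg]
    simp [mac]

lemma mac_pos (t a : ℕ) (ha : 1 ≤ a) : 1 ≤ mac (t+1) a := by
  have hg : t + 1 ≤ Nat.findGreatest (fun n => Nat.choose n (t+1) ≤ a) (a + t + 1) :=
    Nat.le_findGreatest (by omega) (by simp [Nat.choose_self]; omega)
  have hc : 0 < Nat.choose (Nat.findGreatest (fun n => Nat.choose n (t+1) ≤ a) (a + t + 1) + 1) (t+2) :=
    Nat.choose_pos (by omega)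
  rw [mac, if_neg (by omega)]
  omega

def mu (h : ℕ → ℕ) (s : ℕ) : ℕ := ∑ j ∈ Finset.range s, j * h j

lemma sum_shift (h : ℕ → ℕ) (w : ℕ → ℤ) (s i : ℕ) (his : i < s) (h1s : 1 < s) (hi1 : i ≠ 1)
    (hhi : 1 ≤ h i) :
    (∑ j ∈ Finset.range s,
        w j * ((if j = i then h j - 1 else if j = 1 then h j + 1 else h j : ℕ) : ℤ)) =
      (∑ j ∈ Finset.range s, w j * (h j : ℤ)) + w 1 - w i := by
  have key : ∀ j ∈ Finset.range s,
      w j * ((if j = i then h j - 1 else if j = 1 then h j + 1 else h j : ℕ) : ℤ) =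
        w j * (h j : ℤ) + (if j = 1 then w j else 0) - (if j = i then w j else 0) := by
    intro j _
    by_cases hji : j = i
    · subst hji
      rw [if_pos rfl, if_pos rfl, if_neg hi1]
      have : ((h j - 1 : ℕ) : ℤ) = (h j : ℤ) - 1 := by omega
      rw [this]; ring
    · by_cases hj1 : j = 1
      · subst hj1
        simp only [if_neg hji, if_pos rfl]
        push_cast
        ring
      · simp only [if_neg hji, if_neg hj1]
        ring
  rw [Finset.sum_congr rfl key, Finset.sum_sub_distrib, Finset.sum_add_distrib,
    Finset.sum_ite_eq' (Finset.range s) 1 w, Finset.sum_ite_eq' (Finset.range s) i w,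
    if_pos (Finset.mem_range.mpr h1s), if_pos (Finset.mem_range.mpr his)]

lemma topIdx_is_greatest (h : ℕ → ℕ) (s j : ℕ) (hj : topIdx h s < j) (hjs : j ≤ s - 1) :
    h j ≤ 1 := by
  unfold topIdx at hj
  have := Nat.findGreatest_is_greatest hj hjs
  simp only [not_lt] at this
  exact this

lemma keyStep (h : ℕ → ℕ) (s d : ℕ) (hs : 2 ≤ s) (hO : IsOSeq h s)
    (he : mult h s = d) (hne : h ≠ minSeq d s) :
    2 ≤ topIdx h s ∧ IsOSeq (shiftDown h s) s ∧ mult (shiftDown h s) s = d ∧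
    mu (shiftDown h s) s < mu h s := by
  obtain ⟨h0, hpos, hmac⟩ := hO
  have h1pos : 0 < h 1 := (hpos 1).mpr (by omega)
  have hz : ∀ j, s ≤ j → h j = 0 := fun j hj => by
    by_contra hc
    exact absurd ((hpos j).mp (by omega)) (by omega)
  have hi2 : 2 ≤ topIdx h s := by
    by_contra hlt
    push_neg at hlt
    have hone : ∀ j, 2 ≤ j → j < s → h j = 1 := by
      intro j hj2 hjs
      have h1 : h j ≤ 1 := topIdx_is_greatest h s j (by omega) (by omega)
      have := (hpos j).mpr hjs
      omega
    have hsum : mult h s = (h 1 - 1) + s := by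
      unfold mult
      have key : ∀ j ∈ Finset.range s, h j = (if j = 1 then h 1 - 1 else 0) + 1 := by
        intro j hj
        rw [Finset.mem_range] at hj
        rcases Nat.lt_or_ge j 2 with hj2 | hj2
        · interval_cases j
          · simp [h0]
          · simp; omega
        · simp [show j ≠ 1 by omega, hone j hj2 hj]
      rw [Finset.sum_congr rfl key, Finset.sum_add_distrib,
        Finset.sum_ite_eq' (Finset.range s) 1 (fun _ => h 1 - 1),
        if_pos (Finset.mem_range.mpr (by omega : 1 < s))]
      simp
    apply hne
    have h1val : h 1 = d - s + 1 := by omega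
    funext j
    unfold minSeq
    rcases Nat.lt_or_ge j 2 with hj2 | hj2
    · interval_cases j
      · simpa using h0
      · simpa using h1val
    · by_cases hjs : j < s
      · simp [show j ≠ 0 by omega, show j ≠ 1 by omega, hjs, hone j hj2 hjs]
      · simp [show j ≠ 0 by omega, show j ≠ 1 by omega, hjs, hz j (by omega)]
  -- basic facts about i = topIdx h s
  have his : topIdx h s < s := lt_of_le_of_lt (Nat.findGreatest_le (s - 1)) (by omega)
  have hhi : 1 < h (topIdx h s) :=
    (Nat.findGreatest_eq_iff.1 (rfl : topIdx h s = topIdx h s)).2.1 (by omega)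
  have hnext : h (topIdx h s + 1) ≤ 1 := by
    by_cases hc : topIdx h s + 1 < s
    · exact topIdx_is_greatest h s _ (lt_add_one _) (by omega)
    · rw [hz _ (by omega)]; omega
  refine ⟨hi2, ⟨?_, ?_, ?_⟩, ?_, ?_⟩
  · -- value at 0
    simp only [shiftDown]
    rw [if_neg (by omega), if_neg (by omega)]
    exact h0
  · -- positivity
    intro j
    simp only [shiftDown]
    by_cases hji : j = topIdx h s
    · subst hji
      rw [if_pos rfl]
      omega
    · rw [if_neg hji]
      by_cases hj1 : j = 1
      · subst hj1; rw [if_pos rfl]; omega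
      · rw [if_neg hj1]; exact hpos j
  · -- Macaulay conditions
    intro t ht
    simp only [shiftDown]
    by_cases hti : t = topIdx h s
    · -- t = i : need h (t+1) ≤ mac t (h t - 1)
      subst hti
      rw [if_neg (by omega : topIdx h s + 1 ≠ topIdx h s), if_neg (by omega), if_pos rfl]
      obtain ⟨t', ht'⟩ : ∃ t', topIdx h s = t' + 1 := ⟨topIdx h s - 1, by omega⟩
      rw [ht'] at hnext hhi ⊢
      exact le_trans hnext (mac_pos t' _ (by omega))
    · rw [if_neg (by omega : t ≠ topIdx h s)]
      by_cases ht1i : t + 1 = topIdx h s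
      · -- t + 1 = i
        rw [if_pos ht1i]
        by_cases ht1 : t = 1
        · subst ht1
          rw [if_pos rfl, mac_one]
          calc h (1 + 1) - 1 ≤ h (1 + 1) := Nat.sub_le _ _
            _ ≤ Nat.choose (h 1 + 1) 2 := by rw [← mac_one]; exact hmac 1 le_rfl
            _ ≤ Nat.choose (h 1 + 1 + 1) 2 := Nat.choose_le_choose 2 (by omega)
        · rw [if_neg ht1]
          exact le_trans (Nat.sub_le _ _) (hmac t ht)
      · rw [if_neg ht1i]
        by_cases ht1 : t = 1
        · subst ht1
          rw [if_pos rfl, if_neg (by omega : 1 + 1 ≠ 1), mac_one]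
          calc h (1 + 1) ≤ Nat.choose (h 1 + 1) 2 := by rw [← mac_one]; exact hmac 1 le_rfl
            _ ≤ Nat.choose (h 1 + 1 + 1) 2 := Nat.choose_le_choose 2 (by omega)
        · rw [if_neg ht1, if_neg (by omega : t + 1 ≠ 1)]
          exact hmac t ht
  · -- mult preserved
    have key := sum_shift h (fun _ => (1:ℤ)) s (topIdx h s) his (by omega) (by omega) (by omega)
    simp only [one_mul] at key
    have : (mult (shiftDown h s) s : ℤ) = (mult h s : ℤ) := by
      unfold mult
      push_cast
      simp only [shiftDown]
      rw [key]; ring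
    omega
  · -- mu decreases
    have key := sum_shift h (fun j => (j : ℤ)) s (topIdx h s) his (by omega) (by omega) (by omega)
    have hcast : (mu (shiftDown h s) s : ℤ) = (mu h s : ℤ) + 1 - (topIdx h s : ℤ) := by
      unfold mu
      push_cast
      simp only [shiftDown]
      rw [key]
      push_cast
      ring
    omega

lemma reach (s d : ℕ) (hs : 2 ≤ s) :
    ∀ n (k : ℕ → ℕ), mu k s = n → IsOSeq k s → mult k s = d →
    ∃ (N : ℕ) (c : ℕ → ℕ → ℕ),
      c 0 = k ∧ c N = minSeq d s ∧
      (∀ m, m < N → IsOSeq (c m) s ∧ c m ≠ minSeq d s ∧ c (m + 1) = shiftDown (c m) s) := by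
  intro n
  induction n using Nat.strong_induction_on with
  | _ n ih =>
    intro k hmu hO hm
    by_cases hk : k = minSeq d s
    · exact ⟨0, fun _ => k, rfl, by rw [hk], fun m hm => absurd hm (by omega)⟩
    · obtain ⟨hi2, hO', hm', hmu'⟩ := keyStep k s d hs hO hm hk
      obtain ⟨N, c, hc0, hcN, hstep⟩ :=
        ih (mu (shiftDown k s) s) (by omega) (shiftDown k s) rfl hO' hm'
      refine ⟨N + 1, fun m => if m = 0 then k else c (m - 1), by simp, by simp [hcN], ?_⟩
      intro m hmN
      rcases Nat.eq_zero_or_pos m with rfl | hm0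
      · refine ⟨hO, hk, ?_⟩
        simp [hc0]
      · obtain ⟨m', rfl⟩ : ∃ m', m = m' + 1 := ⟨m - 1, by omega⟩
        obtain ⟨a, b, cc⟩ := hstep m' (by omega)
        refine ⟨by simpa using a, by simpa using b, ?_⟩
        simpa [Nat.add_sub_cancel] using cc

/-- Let `d ≥ s ≥ 2` and let `h` be a finite O-sequence of multiplicity `d`
and length `s` with `h ≠ (1, d-s+1, 1^{s-2})`. Then `i = max{1 ≤ j ≤ s-1 : h_j > 1}`
satisfies `i ≥ 2`, and `h - e_i + e_1` is a finite O-sequence of multiplicity `d` and length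
`s`. Moreover, iterating this operation starting from any finite O-sequence of multiplicity
`d` and length `s` reaches `(1, d-s+1, 1^{s-2})` after finitely many steps. -/
theorem stmt3 (h : ℕ → ℕ) (s d : ℕ) (hs : 2 ≤ s) (hsd : s ≤ d) (hO : IsOSeq h s)
    (he : mult h s = d) (hne : h ≠ minSeq d s) :
    2 ≤ topIdx h s ∧ IsOSeq (shiftDown h s) s ∧ mult (shiftDown h s) s = d ∧
    (∀ k : ℕ → ℕ, IsOSeq k s → mult k s = d →
      ∃ (N : ℕ) (c : ℕ → ℕ → ℕ),
        c 0 = k ∧ c N = minSeq d s ∧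
        (∀ m, m < N → IsOSeq (c m) s ∧ c m ≠ minSeq d s ∧ c (m + 1) = shiftDown (c m) s)) := by
  obtain ⟨hi2, hO', hm', hmu'⟩ := keyStep h s d hs hO he hne
  exact ⟨hi2, hO', hm', fun k hOk hmk => reach s d hs (mu k s) k rfl hOk hmk⟩
end

section
/- Let d > s ≥ 3 and let h = (1, h_1, …, h_{s-1}) be the maximum, with respect to the total order <, of the set of finite O-sequences of multiplicity d-1 and length s. Then there exists an index 1 ≤ ı ≤ s-1 such that h + e_ı is a finite O-sequence; taking ı to be the largest such index, h + e_ı is the maximum with respect to < of the set of finite O-sequences of multiplicity d and length s, and the maximal genus among finite O-sequences of multiplicity d and length s equals the maximal genus among finite O-sequences of multiplicity d-1 and length s plus ı - 1. -/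
lemma succ_le_choose (t a : ℕ) : a + 1 ≤ Nat.choose (a + t + 1) (t + 1) := by
  induction t with
  | zero => simp
  | succ t ih =>
    rw [show a + (t+1) + 1 = (a + t + 1) + 1 by ring, Nat.choose_succ_succ]
    exact le_trans ih (Nat.le_add_right _ _)

def KK (t a : ℕ) : ℕ := Nat.findGreatest (fun n => Nat.choose n (t+1) ≤ a) (a + t + 1)

lemma mac_succ (t a : ℕ) : mac (t+1) a =
    if a = 0 then 0 else
      Nat.choose (KK t a + 1) (t+2) + mac t (a - Nat.choose (KK t a) (t+1)) := rfl

lemma KK_ge (t a : ℕ) (ha : 1 ≤ a) : t + 1 ≤ KK t a :=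
  Nat.le_findGreatest (by omega) (by simpa using ha)

lemma KK_spec (t a : ℕ) (ha : 1 ≤ a) : Nat.choose (KK t a) (t+1) ≤ a :=
  Nat.findGreatest_spec (P := fun n => Nat.choose n (t+1) ≤ a) (m := t+1) (n := a + t + 1)
    (by omega) (by simpa using ha)

lemma KK_lt (t a : ℕ) (ha : 1 ≤ a) : a < Nat.choose (KK t a + 1) (t+1) := by
  have hle : KK t a ≤ a + t + 1 := Nat.findGreatest_le _
  have hne : KK t a ≠ a + t + 1 := by
    intro he
    have := KK_spec t a ha
    rw [he] at this
    have := succ_le_choose t a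
    omega
  by_contra hc
  have hg := Nat.findGreatest_is_greatest (P := fun n => Nat.choose n (t+1) ≤ a)
    (n := a + t + 1) (k := KK t a + 1) (Nat.lt_succ_self _) (by omega)
  exact hg (by omega)

lemma mac_lt (t : ℕ) (ht : 1 ≤ t) : ∀ a k : ℕ, a < Nat.choose (k+1) t →
    mac t a < Nat.choose (k+2) (t+1) := by
  induction t with
  | zero => omega
  | succ t ih =>
    intro a k hak
    by_cases ha : a = 0
    · subst ha
      rw [mac_succ]
      simp only [if_pos rfl]
      have htk : t + 1 ≤ k + 1 := by
        by_contra hc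
        rw [Nat.choose_eq_zero_of_lt (by omega)] at hak
        omega
      exact Nat.choose_pos (by omega)
    have ha1 : 1 ≤ a := by omega
    have hK1 : Nat.choose (KK t a) (t+1) ≤ a := KK_spec t a ha1
    have hK2 : a < Nat.choose (KK t a + 1) (t+1) := KK_lt t a ha1
    have hKk : KK t a ≤ k := by
      by_contra hc
      have : Nat.choose (k+1) (t+1) ≤ Nat.choose (KK t a) (t+1) :=
        Nat.choose_le_choose _ (by omega)
      omega
    rw [mac_succ, if_neg ha]
    rcases Nat.eq_zero_or_pos t with h0 | ht'
    · subst h0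
      -- base case: mac 1 a
      have hKa : KK 0 a = a := by
        have h1 := KK_spec 0 a ha1
        have h2 := KK_lt 0 a ha1
        rw [Nat.choose_one_right] at h1
        rw [Nat.choose_one_right] at h2
        omega
      rw [hKa, Nat.choose_one_right, Nat.sub_self]
      show Nat.choose (a+1) 2 + mac 0 0 < Nat.choose (k+2) 2
      have h1 : a < k + 1 := by rwa [Nat.choose_one_right] at hak
      have h2 : Nat.choose (a+1) 2 ≤ Nat.choose (k+1) 2 := Nat.choose_le_choose _ (by omega)
      have h3 : Nat.choose (k+2) 2 = Nat.choose (k+1) 1 + Nat.choose (k+1) 2 :=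
        Nat.choose_succ_succ _ _
      have h4 : 0 < Nat.choose (k+1) 1 := Nat.choose_pos (by omega)
      have h5 : mac 0 0 = 0 := rfl
      omega
    · have hKt : t + 1 ≤ KK t a := KK_ge t a ha1
      have hr : a - Nat.choose (KK t a) (t+1) < Nat.choose (KK t a) t := by
        have hp : Nat.choose (KK t a + 1) (t+1) =
            Nat.choose (KK t a) t + Nat.choose (KK t a) (t+1) := Nat.choose_succ_succ _ _
        omega
      have hih : mac t (a - Nat.choose (KK t a) (t+1)) < Nat.choose (KK t a + 1) (t+1) := by
        have := ih ht' (a - Nat.choose (KK t a) (t+1)) (KK t a - 1)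
          (by rw [show KK t a - 1 + 1 = KK t a by omega]; exact hr)
        rwa [show KK t a - 1 + 2 = KK t a + 1 by omega] at this
      calc Nat.choose (KK t a + 1) (t+2) + mac t (a - Nat.choose (KK t a) (t+1))
          < Nat.choose (KK t a + 1) (t+2) + Nat.choose (KK t a + 1) (t+1) := by omega
        _ ≤ Nat.choose (KK t a + 2) (t+2) := by
            have hps : Nat.choose (KK t a + 2) (t+2) =
                Nat.choose (KK t a + 1) (t+1) + Nat.choose (KK t a + 1) (t+2) := by
              simpa [Nat.succ_eq_add_one] using Nat.choose_succ_succ (KK t a + 1) (t+1)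
            omega
        _ ≤ Nat.choose (k+2) (t+2) := Nat.choose_le_choose _ (by omega)

lemma mac_mono (t : ℕ) : ∀ a b : ℕ, a ≤ b → mac t a ≤ mac t b := by
  induction t with
  | zero => simp [mac]
  | succ t ih =>
    intro a b hab
    by_cases ha : a = 0
    · simp [mac_succ, ha]
    have hb : b ≠ 0 := by omega
    have ha1 : 1 ≤ a := by omega
    have hKab : KK t a ≤ KK t b :=
      Nat.findGreatest_mono (fun n hn => le_trans hn hab) (by omega)
    rcases eq_or_lt_of_le hKab with heq | hlt
    · rw [mac_succ, mac_succ, if_neg ha, if_neg hb, ← heq]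
      exact Nat.add_le_add_left (ih _ _ (by omega)) _
    · have h1 : mac (t+1) a < Nat.choose (KK t a + 2) (t+2) :=
        mac_lt (t+1) (by omega) a (KK t a) (KK_lt t a ha1)
      have h2 : Nat.choose (KK t b + 1) (t+2) ≤ mac (t+1) b := by
        rw [mac_succ, if_neg hb]; exact Nat.le_add_right _ _
      have h3 : Nat.choose (KK t a + 2) (t+2) ≤ Nat.choose (KK t b + 1) (t+2) :=
        Nat.choose_le_choose _ (by omega)
      omega

section Infra

lemma oseq_pos {k : ℕ → ℕ} {s i : ℕ} (hk : IsOSeq k s) (hi : i < s) : 1 ≤ k i :=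
  (hk.2.1 i).mpr hi

lemma oseq_zero {k : ℕ → ℕ} {s i : ℕ} (hk : IsOSeq k s) (hi : s ≤ i) : k i = 0 := by
  have := hk.2.1 i
  omega

lemma oseq_le_mult {k : ℕ → ℕ} {s i : ℕ} (hi : i < s) : k i ≤ mult k s :=
  Finset.single_le_sum (fun j _ => Nat.zero_le (k j)) (Finset.mem_range.mpr hi)

lemma addE_self (k : ℕ → ℕ) (i : ℕ) : addE k i i = k i + 1 := by simp [addE]

lemma addE_ne (k : ℕ → ℕ) {i j : ℕ} (hij : j ≠ i) : addE k i j = k j := by simp [addE, hij]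

lemma subE_self (k : ℕ → ℕ) (i : ℕ) : subE k i i = k i - 1 := by simp [subE]

lemma subE_ne (k : ℕ → ℕ) {i j : ℕ} (hij : j ≠ i) : subE k i j = k j := by simp [subE, hij]

lemma mult_addE {k : ℕ → ℕ} {s i : ℕ} (hi : i < s) : mult (addE k i) s = mult k s + 1 := by
  unfold mult
  have : ∀ j, addE k i j = k j + (if j = i then 1 else 0) := by
    intro j; by_cases hj : j = i <;> simp [addE, hj]
  simp only [this]
  rw [Finset.sum_add_distrib, Finset.sum_ite_eq' (Finset.range s) i (fun _ => 1),
    if_pos (Finset.mem_range.mpr hi)]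

lemma mult_subE {k : ℕ → ℕ} {s i : ℕ} (hi : i < s) (h1 : 1 ≤ k i) :
    mult (subE k i) s + 1 = mult k s := by
  unfold mult
  have : ∀ j, k j = subE k i j + (if j = i then 1 else 0) := by
    intro j; by_cases hj : j = i <;> simp [subE, hj] <;> omega
  conv_rhs => rw [Finset.sum_congr rfl (fun j _ => this j)]
  rw [Finset.sum_add_distrib, Finset.sum_ite_eq' (Finset.range s) i (fun _ => 1),
    if_pos (Finset.mem_range.mpr hi)]

lemma genus_addE {k : ℕ → ℕ} {s i : ℕ} (hi : i < s) :
    genus (addE k i) s = genus k s + (i - 1) := by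
  unfold genus
  have : ∀ j, (j - 1) * addE k i j = (j - 1) * k j + (if j = i then i - 1 else 0) := by
    intro j; by_cases hj : j = i <;> simp [addE, hj] <;> ring_nf <;> omega
  simp only [this]
  rw [Finset.sum_add_distrib, Finset.sum_ite_eq' (Finset.range s) i (fun _ => i - 1),
    if_pos (Finset.mem_range.mpr hi)]

lemma genus_subE {k : ℕ → ℕ} {s i : ℕ} (hi : i < s) (h1 : 1 ≤ k i) :
    genus (subE k i) s + (i - 1) = genus k s := by
  unfold genus
  have : ∀ j, (j - 1) * k j = (j - 1) * subE k i j + (if j = i then i - 1 else 0) := by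
    intro j
    by_cases hj : j = i
    · subst hj
      simp only [subE, if_pos rfl]
      obtain ⟨c, hc⟩ := Nat.exists_eq_add_of_le h1
      rw [hc, Nat.add_sub_cancel_left]
      simp only [if_true]
      ring
    · simp [subE, hj]
  conv_rhs => rw [Finset.sum_congr rfl (fun j _ => this j)]
  rw [Finset.sum_add_distrib, Finset.sum_ite_eq' (Finset.range s) i (fun _ => i - 1),
    if_pos (Finset.mem_range.mpr hi)]

lemma oLT_asymm {a b : ℕ → ℕ} (h1 : oLT a b) (h2 : oLT b a) : False := by
  obtain ⟨l1, hl1, he1⟩ := h1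
  obtain ⟨l2, hl2, he2⟩ := h2
  rcases lt_trichotomy l1 l2 with hc | hc | hc
  · have := he1 l2 hc; omega
  · subst hc; omega
  · have := he2 l1 hc; omega

lemma oLT_irrefl {a : ℕ → ℕ} (h : oLT a a) : False := by
  obtain ⟨l, hl, _⟩ := h; omega

lemma oLT_trans {a b c : ℕ → ℕ} (h1 : oLT a b) (h2 : oLT b c) : oLT a c := by
  obtain ⟨l1, hl1, he1⟩ := h1
  obtain ⟨l2, hl2, he2⟩ := h2
  rcases lt_trichotomy l1 l2 with hc | hc | hc
  · exact ⟨l2, by rw [he1 l2 hc]; exact hl2, fun j hj => by rw [he1 j (by omega), he2 j hj]⟩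
  · subst hc; exact ⟨l1, lt_trans hl1 hl2, fun j hj => by rw [he1 j hj, he2 j hj]⟩
  · exact ⟨l1, by rw [← he2 l1 hc]; exact hl1, fun j hj => by rw [he1 j hj, he2 j (by omega)]⟩

lemma oLT_total {k X : ℕ → ℕ} {s : ℕ} (hk : IsOSeq k s) (hX : IsOSeq X s) (hne : k ≠ X) :
    oLT k X ∨ oLT X k := by
  classical
  have hex : ∃ j, k j ≠ X j := by
    by_contra hc
    push_neg at hc
    exact hne (funext hc)
  obtain ⟨j, hj⟩ := hex
  have hjs : j < s := by
    by_contra hc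
    rw [oseq_zero hk (by omega), oseq_zero hX (by omega)] at hj
    exact hj rfl
  set l := Nat.findGreatest (fun j => k j ≠ X j) s with hl
  have hlj : j ≤ l := Nat.le_findGreatest (by omega) hj
  have hj1 : 1 ≤ j := by
    rcases Nat.eq_zero_or_pos j with h0 | h0
    · exfalso; rw [h0] at hj; rw [hk.1, hX.1] at hj; exact hj rfl
    · omega
  have hspec : k l ≠ X l :=
    Nat.findGreatest_spec (P := fun j => k j ≠ X j) (m := j) (by omega) hj
  have habove : ∀ i, l < i → k i = X i := by
    intro i hi
    rcases le_or_gt i s with h1 | h1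
    · by_contra hc
      exact Nat.findGreatest_is_greatest (P := fun j => k j ≠ X j) hi h1 hc
    · rw [oseq_zero hk (by omega), oseq_zero hX (by omega)]
  rcases lt_or_gt_of_ne hspec with hc | hc
  · exact Or.inl ⟨l, hc, habove⟩
  · exact Or.inr ⟨l, hc, fun i hi => (habove i hi).symm⟩

/-- weight for comparing sequences -/
def wt (d s : ℕ) (k : ℕ → ℕ) : ℕ := ∑ j ∈ Finset.range s, k j * (d + 1) ^ j

lemma geom_aux (d l : ℕ) : (∑ j ∈ Finset.range l, d * (d + 1) ^ j) + 1 = (d + 1) ^ l := by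
  induction l with
  | zero => simp
  | succ l ih =>
    rw [Finset.sum_range_succ, pow_succ]
    have : (d+1)^l * (d+1) = d * (d+1)^l + (d+1)^l := by ring
    omega

lemma wt_bound {d s : ℕ} {k : ℕ → ℕ} (hb : ∀ j, j < s → k j ≤ d) : wt d s k < (d + 1) ^ s := by
  have h1 : wt d s k ≤ ∑ j ∈ Finset.range s, d * (d + 1) ^ j := by
    apply Finset.sum_le_sum
    intro j hj
    exact Nat.mul_le_mul_right _ (hb j (Finset.mem_range.mp hj))
  have := geom_aux d s
  omega

lemma wt_lt {d s : ℕ} {k N : ℕ → ℕ} (hb : ∀ j, j < s → k j ≤ d) {l : ℕ} (hls : l < s)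
    (h1 : k l < N l) (h2 : ∀ j, l < j → k j = N j) : wt d s k < wt d s N := by
  unfold wt
  rw [Finset.range_eq_Ico, ← Finset.sum_Ico_consecutive _ (Nat.zero_le (l+1)) (by omega : l + 1 ≤ s),
    ← Finset.sum_Ico_consecutive _ (Nat.zero_le (l+1)) (by omega : l + 1 ≤ s)]
  have htail : ∑ j ∈ Finset.Ico (l+1) s, k j * (d+1)^j = ∑ j ∈ Finset.Ico (l+1) s, N j * (d+1)^j := by
    apply Finset.sum_congr rfl
    intro j hj
    rw [h2 j (by simp at hj; omega)]
  rw [htail]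
  apply Nat.add_lt_add_right
  rw [← Finset.range_eq_Ico, Finset.sum_range_succ, Finset.sum_range_succ]
  have hhead : ∑ j ∈ Finset.range l, k j * (d+1)^j ≤ ∑ j ∈ Finset.range l, d * (d+1)^j := by
    apply Finset.sum_le_sum
    intro j hj
    exact Nat.mul_le_mul_right _ (hb j (by simp at hj; omega))
  have hgeom := geom_aux d l
  have hNl : (k l + 1) * (d+1)^l ≤ N l * (d+1)^l := Nat.mul_le_mul_right _ (by omega)
  have hz : 0 ≤ ∑ j ∈ Finset.range l, N j * (d+1)^j := Nat.zero_le _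
  have hexp : (k l + 1) * (d+1)^l = k l * (d+1)^l + (d+1)^l := by ring
  omega

end Infra

section Move

lemma isOSeq_addE {k : ℕ → ℕ} {s i : ℕ} (hk : IsOSeq k s) (hi1 : 1 ≤ i) (his : i < s)
    (hcond : i = 1 ∨ k i + 1 ≤ mac (i-1) (k (i-1))) : IsOSeq (addE k i) s := by
  refine ⟨by rw [addE_ne k (by omega : (0:ℕ) ≠ i)]; exact hk.1, ?_, ?_⟩
  · intro j
    by_cases hj : j = i
    · subst hj; rw [addE_self]; omega
    · rw [addE_ne k hj]; exact hk.2.1 j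
  · intro t ht
    by_cases h1 : t + 1 = i
    · rcases hcond with hc | hc
      · omega
      · have ht' : t = i - 1 := by omega
        subst ht'
        rw [h1, addE_self, addE_ne k (show i - 1 ≠ i by omega)]
        exact hc
    · by_cases h2 : t = i
      · subst h2
        rw [addE_ne k h1, addE_self]
        exact le_trans (hk.2.2 t ht) (mac_mono t _ _ (by omega))
      · rw [addE_ne k h1, addE_ne k h2]
        exact hk.2.2 t ht

lemma isOSeq_subE {k : ℕ → ℕ} {s p : ℕ} (hk : IsOSeq k s) (hp1 : 1 ≤ p) (hps : p < s)
    (h2 : 2 ≤ k p) (hcond : k (p+1) ≤ mac p (k p - 1)) : IsOSeq (subE k p) s := by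
  refine ⟨by rw [subE_ne k (by omega : (0:ℕ) ≠ p)]; exact hk.1, ?_, ?_⟩
  · intro j
    by_cases hj : j = p
    · subst hj; rw [subE_self]; omega
    · rw [subE_ne k hj]; exact hk.2.1 j
  · intro t ht
    by_cases h1 : t + 1 = p
    · have ht' : t = p - 1 := by omega
      subst ht'
      have hcd := hk.2.2 (p-1) ht
      rw [h1] at hcd
      rw [h1, subE_self, subE_ne k (show p - 1 ≠ p by omega)]
      omega
    · by_cases hq : t = p
      · subst hq
        rw [subE_ne k h1, subE_self]
        exact hcond
      · rw [subE_ne k h1, subE_ne k hq]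
        exact hk.2.2 t ht

lemma move {s : ℕ} {k X : ℕ → ℕ} (hk : IsOSeq k s) (hX : IsOSeq X s) {q : ℕ} (hqs : q < s)
    (hlt : k q < X q) (hm0 : ∃ m0, 1 ≤ m0 ∧ m0 < q ∧ X m0 < k m0) :
    ∃ m j0, 1 ≤ m ∧ m < j0 ∧ j0 ≤ q ∧ 2 ≤ k m ∧ IsOSeq (addE (subE k m) j0) s := by
  classical
  obtain ⟨m0, hm01, hm0q, hm0lt⟩ := hm0
  set m := Nat.findGreatest (fun j => X j < k j) (q-1) with hm
  have hm1 : m0 ≤ m := Nat.le_findGreatest (by omega) hm0lt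
  have hmlt : X m < k m :=
    Nat.findGreatest_spec (P := fun j => X j < k j) (m := m0) (n := q - 1) (by omega) hm0lt
  have hmq : m ≤ q - 1 := Nat.findGreatest_le _
  have hmid1 : ∀ j, m < j → j ≤ q - 1 → k j ≤ X j := by
    intro j hj1 hj2
    have := Nat.findGreatest_is_greatest (P := fun j => X j < k j) hj1 hj2
    omega
  have hexj : ∃ j, m < j ∧ j ≤ q ∧ k j < X j := ⟨q, by omega, le_refl q, hlt⟩
  set j0 := Nat.find hexj with hj0def
  have hspec := Nat.find_spec hexj
  rw [← hj0def] at hspec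
  obtain ⟨hj0m, hj0q, hj0lt⟩ := hspec
  have hmin : ∀ j, m < j → j < j0 → k j = X j := by
    intro j h1 h2
    have hnot := Nat.find_min hexj h2
    have hle : k j ≤ X j := hmid1 j h1 (by omega)
    have : ¬ k j < X j := fun hc => hnot ⟨h1, by omega, hc⟩
    omega
  have hms : m < s := by omega
  have hXm : 1 ≤ X m := oseq_pos hX hms
  have hkm2 : 2 ≤ k m := by omega
  have hj0s : j0 < s := by omega
  have hNval : ∀ j, j ≠ m → j ≠ j0 → addE (subE k m) j0 j = k j := by
    intro j hj1 hj2; rw [addE_ne _ hj2, subE_ne _ hj1]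
  have hNm : addE (subE k m) j0 m = k m - 1 := by
    rw [addE_ne _ (show m ≠ j0 by omega), subE_self]
  have hNj0 : addE (subE k m) j0 j0 = k j0 + 1 := by
    rw [addE_self, subE_ne _ (show j0 ≠ m by omega)]
  refine ⟨m, j0, by omega, hj0m, hj0q, hkm2, ?_, ?_, ?_⟩
  · rw [hNval 0 (by omega) (by omega)]; exact hk.1
  · intro j
    by_cases hj1 : j = m
    · subst hj1; rw [hNm]; omega
    · by_cases hj2 : j = j0
      · subst hj2; rw [hNj0]; omega
      · rw [hNval j hj1 hj2]; exact hk.2.1 j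
  · intro t ht
    by_cases hA : t + 1 = m
    · have hcd := hk.2.2 t ht
      rw [hA] at hcd ⊢
      rw [hNm, hNval t (by omega) (by omega)]
      omega
    · by_cases hB : t = m
      · subst hB
        by_cases hC : m + 1 = j0
        · rw [hC, hNj0, hNm]
          have h2 : X (m+1) ≤ mac m (X m) := hX.2.2 m ht
          rw [hC] at h2
          have h3 : mac m (X m) ≤ mac m (k m - 1) := mac_mono m _ _ (by omega)
          omega
        · rw [hNm, hNval (m+1) hA hC]
          have heq : k (m+1) = X (m+1) := hmin (m+1) (by omega) (by omega)
          have h2 : X (m+1) ≤ mac m (X m) := hX.2.2 m ht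
          have h3 : mac m (X m) ≤ mac m (k m - 1) := mac_mono m _ _ (by omega)
          omega
      · by_cases hD : t + 1 = j0
        · rw [hD, hNj0, hNval t hB (by omega)]
          have heqt : k t = X t := hmin t (by omega) (by omega)
          have h2 : X (t+1) ≤ mac t (X t) := hX.2.2 t ht
          rw [hD] at h2
          rw [heqt]
          omega
        · by_cases hE : t = j0
          · subst hE
            rw [hNval (j0+1) hA hD, hNj0]
            exact le_trans (hk.2.2 j0 ht) (mac_mono _ _ _ (by omega))
          · rw [hNval (t+1) hA hD, hNval t hB hE]
            exact hk.2.2 t ht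

end Move

section Phases

lemma top_diff {k h : ℕ → ℕ} {s j : ℕ} (hk : IsOSeq k s) (hh : IsOSeq h s) (hj : k j ≠ h j) :
    ∃ p, k p ≠ h p ∧ (∀ i, p < i → k i = h i) ∧ j ≤ p ∧ p < s := by
  classical
  have hjs : j < s := by
    by_contra hc
    rw [oseq_zero hk (by omega), oseq_zero hh (by omega)] at hj
    exact hj rfl
  have hple := Nat.findGreatest_le (P := fun i => k i ≠ h i) s
  have hspec : k (Nat.findGreatest (fun i => k i ≠ h i) s) ≠
      h (Nat.findGreatest (fun i => k i ≠ h i) s) :=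
    Nat.findGreatest_spec (P := fun i => k i ≠ h i) (m := j) (n := s) (by omega) hj
  refine ⟨Nat.findGreatest (fun i => k i ≠ h i) s, hspec, ?_, Nat.le_findGreatest (P := fun i => k i ≠ h i) (n := s) (by omega) hj, ?_⟩
  · intro i hi
    rcases le_or_gt i s with h1 | h1
    · by_contra hc
      exact Nat.findGreatest_is_greatest hi h1 hc
    · rw [oseq_zero hk (by omega), oseq_zero hh (by omega)]
  · rcases eq_or_lt_of_le hple with hc | hc
    · exfalso
      rw [hc, oseq_zero hk (le_refl s), oseq_zero hh (le_refl s)] at hspec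
      exact absurd rfl hspec
    · exact hc

lemma sum_strip_zero (k : ℕ → ℕ) {q : ℕ} (hq : 1 ≤ q) :
    ∑ j ∈ Finset.range q, k j = k 0 + ∑ j ∈ Finset.Ico 1 q, k j := by
  rw [Finset.range_eq_Ico, ← Finset.sum_Ico_consecutive (fun j => k j) (Nat.zero_le 1) hq]
  have h0 : ∑ j ∈ Finset.Ico 0 1, k j = k 0 := by simp
  omega

lemma sum_split {s q : ℕ} (k : ℕ → ℕ) (hq : q + 1 ≤ s) :
    ∑ j ∈ Finset.range (q+1), k j + ∑ j ∈ Finset.Ico (q+1) s, k j = mult k s := by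
  rw [mult, Finset.range_eq_Ico, Finset.range_eq_Ico]
  exact Finset.sum_Ico_consecutive k (by omega : 0 ≤ q + 1) hq

lemma genus_le {d s e : ℕ} {X : ℕ → ℕ} (he : e ≤ d) (hX : IsOSeq X s) (hmX : mult X s = e)
    (hgr : ∀ k, IsOSeq k s → mult k s = e → k ≠ X → oLT k X) :
    ∀ k, IsOSeq k s → mult k s = e → genus k s ≤ genus X s := by
  suffices hmain : ∀ n k, IsOSeq k s → mult k s = e → wt d s X ≤ wt d s k + n →
      genus k s ≤ genus X s by
    intro k hk hm
    exact hmain (wt d s X) k hk hm (by omega)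
  intro n
  induction n with
  | zero =>
    intro k hk hm hw
    by_cases hkX : k = X
    · rw [hkX]
    · exfalso
      obtain ⟨l, hl1, hl2⟩ := hgr k hk hm hkX
      have hls : l < s := (hX.2.1 l).mp (by omega)
      have : wt d s k < wt d s X :=
        wt_lt (fun j hj => by have := oseq_le_mult (k := k) (s := s) (i := j) hj; omega) hls hl1 hl2
      omega
  | succ n ih =>
    intro k hk hm hw
    by_cases hkX : k = X
    · rw [hkX]
    obtain ⟨l, hl1, hl2⟩ := hgr k hk hm hkX
    have hls : l < s := (hX.2.1 l).mp (by omega)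
    have hl0 : 1 ≤ l := by
      by_contra hc
      have h0 : l = 0 := by omega
      rw [h0, hk.1, hX.1] at hl1
      omega
    have htail : ∑ j ∈ Finset.Ico (l+1) s, k j = ∑ j ∈ Finset.Ico (l+1) s, X j :=
      Finset.sum_congr rfl (fun j hj => hl2 j (by simp only [Finset.mem_Ico] at hj; omega))
    have hsplitk := sum_split k (show l + 1 ≤ s by omega)
    have hsplitX := sum_split X (show l + 1 ≤ s by omega)
    have hsum1 : ∑ j ∈ Finset.range (l+1), k j = ∑ j ∈ Finset.range (l+1), X j := by omega
    rw [Finset.sum_range_succ, Finset.sum_range_succ] at hsum1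
    have e5 := sum_strip_zero k hl0
    have e6 := sum_strip_zero X hl0
    have hk0 : k 0 = 1 := hk.1
    have hX0 : X 0 = 1 := hX.1
    have hexm : ∃ m ∈ Finset.Ico 1 l, X m < k m := Finset.exists_lt_of_sum_lt (by omega)
    obtain ⟨m0, hm0mem, hm0lt⟩ := hexm
    simp only [Finset.mem_Ico] at hm0mem
    obtain ⟨m, j0, hm1, hmj0, hj0q, hkm2, hON⟩ :=
      move hk hX hls hl1 ⟨m0, hm0mem.1, hm0mem.2, hm0lt⟩
    have hj0s : j0 < s := by omega
    have hms : m < s := by omega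
    have hmultN : mult (addE (subE k m) j0) s = e := by
      rw [mult_addE hj0s]
      have := mult_subE (k := k) hms (show 1 ≤ k m by omega)
      omega
    have hgen : genus k s ≤ genus (addE (subE k m) j0) s := by
      rw [genus_addE hj0s]
      have := genus_subE (k := k) hms (show 1 ≤ k m by omega)
      omega
    have holtkN : oLT k (addE (subE k m) j0) :=
      ⟨j0, by rw [addE_self, subE_ne k (show j0 ≠ m by omega)]; omega,
       fun j hj => by rw [addE_ne _ (show j ≠ j0 by omega), subE_ne _ (show j ≠ m by omega)]⟩
    have hwtlt : wt d s k < wt d s (addE (subE k m) j0) :=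
      wt_lt (fun j hj => by have := oseq_le_mult (k := k) (s := s) (i := j) hj; omega) hj0s
        (by rw [addE_self, subE_ne k (show j0 ≠ m by omega)]; omega)
        (fun j hj => by rw [addE_ne _ (show j ≠ j0 by omega), subE_ne _ (show j ≠ m by omega)])
    have hwtNX : wt d s (addE (subE k m) j0) ≤ wt d s X := by
      by_cases hNX : addE (subE k m) j0 = X
      · rw [hNX]
      · obtain ⟨l', ha, hb⟩ := hgr _ hON hmultN hNX
        have hl's : l' < s := (hX.2.1 l').mp (by omega)
        exact le_of_lt (wt_lt
          (fun j hj => by have := oseq_le_mult (k := addE (subE k m) j0) (s := s) (i := j) hj; omega)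
          hl's ha hb)
    exact le_trans hgen (ih (addE (subE k m) j0) hON hmultN (by omega))

end Phases

section PhaseOne

lemma phase1 {d s : ℕ} {h : ℕ → ℕ} (hs : 3 ≤ s) (hsd : s < d)
    (hOh : IsOSeq h s) (heh : mult h s = d - 1)
    (hmax : ∀ k, IsOSeq k s → mult k s = d - 1 → k ≠ h → oLT k h)
    {ii : ℕ} (hii1 : 1 ≤ ii) (hiis : ii < s) (hOii : IsOSeq (addE h ii) s)
    (hiimax : ∀ j, ii < j → ¬ IsOSeq (addE h j) s) :
    ∀ k, IsOSeq k s → mult k s = d → ¬ oLT (addE h ii) k := by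
  suffices hmain : ∀ n k, IsOSeq k s → mult k s = d → (d+1)^s ≤ wt d s k + n →
      ¬ oLT (addE h ii) k by
    intro k hk hm
    exact hmain ((d+1)^s) k hk hm (by omega)
  intro n
  induction n with
  | zero =>
    intro k hk hm hw hcon
    have hb : wt d s k < (d+1)^s :=
      wt_bound (fun j hj => by have := oseq_le_mult (k := k) (s := s) (i := j) hj; omega)
    omega
  | succ n ih =>
    intro k hk hm hw hcon
    have horig := hcon
    obtain ⟨l0, hl0lt, hl0eq⟩ := hcon
    have hkstii : addE h ii ii = h ii + 1 := addE_self h ii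
    have hl0h : h l0 < k l0 := by
      by_cases hj : l0 = ii
      · subst hj; rw [hkstii] at hl0lt; omega
      · rw [addE_ne h hj] at hl0lt; omega
    have hl0s : l0 < s := (hk.2.1 l0).mp (by omega)
    have hl01 : 1 ≤ l0 := by
      by_contra hc
      have h0 : l0 = 0 := by omega
      rw [h0, hk.1, hOh.1] at hl0h
      omega
    obtain ⟨p, hpspec, hpabove, hpl0, hps⟩ := top_diff hk hOh (show k l0 ≠ h l0 by omega)
    -- p is not below ii
    have hiip : ii ≤ p := by
      by_contra hip
      push_neg at hip
      refine oLT_asymm horig ⟨ii, ?_, ?_⟩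
      · rw [hkstii, hpabove ii hip]; omega
      · intro j hj
        rw [addE_ne h (show j ≠ ii by omega)]
        exact hpabove j (by omega)
    -- k p > h p
    have hpgt : h p < k p := by
      rcases lt_trichotomy (k p) (h p) with hc | hc | hc
      · exfalso
        refine oLT_asymm horig ⟨p, ?_, ?_⟩
        · by_cases hpii : p = ii
          · subst hpii; rw [hkstii]; omega
          · rw [addE_ne h hpii]; omega
        · intro j hj
          rw [addE_ne h (show j ≠ ii by omega)]
          exact hpabove j hj
      · exact absurd hc hpspec
      · exact hc
    have hhp1 : 1 ≤ h p := oseq_pos hOh hps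
    have hp1 : 1 ≤ p := by omega
    -- k - e_p is an O-sequence
    have hsub : IsOSeq (subE k p) s := by
      refine isOSeq_subE hk hp1 hps (by omega) ?_
      have h1 : k (p+1) = h (p+1) := hpabove (p+1) (by omega)
      have h2 : h (p+1) ≤ mac p (h p) := hOh.2.2 p (by omega)
      have h3 := mac_mono p (h p) (k p - 1) (by omega)
      omega
    have hmsub : mult (subE k p) s = d - 1 := by
      have := mult_subE (k := k) hps (show 1 ≤ k p by omega)
      omega
    by_cases hk'h : subE k p = h
    · -- k = h + e_p
      have hkeq : k = addE h p := by
        funext j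
        by_cases hj : j = p
        · subst hj
          rw [addE_self]
          have h4 := congrFun hk'h j
          rw [subE_self] at h4
          omega
        · rw [addE_ne h hj]
          have h4 := congrFun hk'h j
          rwa [subE_ne k hj] at h4
      have hpi : p ≤ ii := by
        by_contra hc
        exact hiimax p (by omega) (hkeq ▸ hk)
      have hpeq : p = ii := by omega
      rw [hkeq, hpeq] at horig
      exact oLT_irrefl horig
    · obtain ⟨q, hqlt, hqeq⟩ := hmax (subE k p) hsub hmsub hk'h
      have hqp : q < p := by
        rcases lt_trichotomy q p with hc | hc | hc
        · exact hc
        · exfalso; rw [hc, subE_self] at hqlt; omega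
        · exfalso
          have h4 : subE k p q = k q := subE_ne k (by omega)
          have h5 := hpabove q hc
          omega
      have hkpval : k p = h p + 1 := by
        have h4 := hqeq p hqp
        rw [subE_self] at h4
        omega
      -- p = ii
      have hpeq : p = ii := by
        rcases eq_or_lt_of_le hiip with hc | hc
        · omega
        · exfalso
          have hp2 : 2 ≤ p := by omega
          have h4 : k p ≤ mac (p-1) (k (p-1)) := by
            have := hk.2.2 (p-1) (by omega)
            rwa [show p - 1 + 1 = p by omega] at this
          have h5 : k (p-1) ≤ h (p-1) := by
            rcases eq_or_lt_of_le (show q ≤ p - 1 by omega) with hq1 | hq1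
            · have h6 : subE k p q = k q := subE_ne k (by omega)
              rw [← hq1]
              omega
            · have h6 := hqeq (p-1) (by omega)
              rw [subE_ne k (show p - 1 ≠ p by omega)] at h6
              omega
          have h7 : h p + 1 ≤ mac (p-1) (h (p-1)) :=
            calc h p + 1 = k p := hkpval.symm
              _ ≤ mac (p-1) (k (p-1)) := h4
              _ ≤ mac (p-1) (h (p-1)) := mac_mono _ _ _ h5
          exact hiimax p hc (isOSeq_addE hOh (by omega) hps (Or.inr h7))
      -- q ≥ 1 and k q < h q
      have hq1 : 1 ≤ q := by
        by_contra hc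
        have h0 : q = 0 := by omega
        rw [h0, subE_ne k (show (0:ℕ) ≠ p by omega), hk.1, hOh.1] at hqlt
        omega
      have hqs' : q < s := by omega
      have hkq : k q < h q := by
        have h6 : subE k p q = k q := subE_ne k (by omega)
        omega
      -- tail sums
      have htail : ∑ j ∈ Finset.Ico (q+1) s, k j = (∑ j ∈ Finset.Ico (q+1) s, h j) + 1 := by
        have hco : ∀ j ∈ Finset.Ico (q+1) s, k j = h j + (if j = ii then 1 else 0) := by
          intro j hj
          simp only [Finset.mem_Ico] at hj
          by_cases hjii : j = ii
          · rw [if_pos hjii, hjii, ← hpeq]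
            exact hkpval
          · rw [if_neg hjii]
            have h6 := hqeq j (by omega)
            rwa [subE_ne k (show j ≠ p by omega)] at h6
        rw [Finset.sum_congr rfl hco, Finset.sum_add_distrib,
          Finset.sum_ite_eq' (Finset.Ico (q+1) s) ii (fun _ => 1),
          if_pos (by simp only [Finset.mem_Ico]; omega)]
      have hsplitk := sum_split k (show q + 1 ≤ s by omega)
      have hsplith := sum_split h (show q + 1 ≤ s by omega)
      have hsum1 : ∑ j ∈ Finset.range (q+1), k j = ∑ j ∈ Finset.range (q+1), h j := by omega
      rw [Finset.sum_range_succ, Finset.sum_range_succ] at hsum1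
      have e5 := sum_strip_zero k hq1
      have e6 := sum_strip_zero h hq1
      have hk0 : k 0 = 1 := hk.1
      have hh0 : h 0 = 1 := hOh.1
      have hexm : ∃ m ∈ Finset.Ico 1 q, h m < k m := Finset.exists_lt_of_sum_lt (by omega)
      obtain ⟨m0, hm0mem, hm0lt⟩ := hexm
      simp only [Finset.mem_Ico] at hm0mem
      obtain ⟨m, j0, hm1, hmj0, hj0q, hkm2, hON⟩ :=
        move hk hOh hqs' hkq ⟨m0, hm0mem.1, hm0mem.2, hm0lt⟩
      have hj0s : j0 < s := by omega
      have hms : m < s := by omega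
      have hmultN : mult (addE (subE k m) j0) s = d := by
        rw [mult_addE hj0s]
        have := mult_subE (k := k) hms (show 1 ≤ k m by omega)
        omega
      have holtkN : oLT k (addE (subE k m) j0) :=
        ⟨j0, by rw [addE_self, subE_ne k (show j0 ≠ m by omega)]; omega,
         fun j hj => by rw [addE_ne _ (show j ≠ j0 by omega), subE_ne _ (show j ≠ m by omega)]⟩
      have hwtlt : wt d s k < wt d s (addE (subE k m) j0) :=
        wt_lt (fun j hj => by have := oseq_le_mult (k := k) (s := s) (i := j) hj; omega) hj0s
          (by rw [addE_self, subE_ne k (show j0 ≠ m by omega)]; omega)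
          (fun j hj => by rw [addE_ne _ (show j ≠ j0 by omega), subE_ne _ (show j ≠ m by omega)])
      exact ih (addE (subE k m) j0) hON hmultN (by omega) (oLT_trans horig holtkN)

end PhaseOne


theorem stmt8_aux (d s : ℕ) (h : ℕ → ℕ) (hs : 3 ≤ s) (hsd : s < d)
    (hOh : IsOSeq h s) (heh : mult h s = d - 1)
    (hmax : ∀ k : ℕ → ℕ, IsOSeq k s → mult k s = d - 1 → k ≠ h → oLT k h) :
    (∃ i, 1 ≤ i ∧ i ≤ s - 1 ∧ IsOSeq (addE h i) s) ∧
    (∀ imax : ℕ, IsOSeq (addE h imax) s → (∀ j, imax < j → ¬ IsOSeq (addE h j) s) →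
      (∀ k : ℕ → ℕ, IsOSeq k s → mult k s = d → k ≠ addE h imax → oLT k (addE h imax)) ∧
      (∀ M M' : ℕ, IsGreatest (genusSet d s) M → IsGreatest (genusSet (d - 1) s) M' →
        M = M' + (imax - 1))) := by
  constructor
  · exact ⟨1, le_refl 1, by omega, isOSeq_addE hOh (le_refl 1) (by omega) (Or.inl rfl)⟩
  · intro imax hOim hilm
    have him1 : 1 ≤ imax := by
      by_contra h0
      have h1 := hOim.1
      have h2 : imax = 0 := by omega
      rw [h2] at h1
      rw [addE_self, hOh.1] at h1
      omega
    have hims : imax < s := (hOim.2.1 imax).mp (by rw [addE_self]; omega)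
    have hmult : mult (addE h imax) s = d := by
      rw [mult_addE hims, heh]; omega
    have hph1 := phase1 hs hsd hOh heh hmax him1 hims hOim hilm
    have hgr : ∀ k, IsOSeq k s → mult k s = d → k ≠ addE h imax → oLT k (addE h imax) := by
      intro k hk hmk hne
      rcases oLT_total hk hOim hne with hc | hc
      · exact hc
      · exact absurd hc (hph1 k hk hmk)
    refine ⟨hgr, ?_⟩
    intro M M' hM hM'
    have hGd : IsGreatest (genusSet d s) (genus (addE h imax) s) := by
      constructor
      · exact ⟨addE h imax, hOim, hmult, rfl⟩
      · rintro g ⟨k, hk1, hk2, rfl⟩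
        exact genus_le (d := d) (le_refl d) hOim hmult hgr k hk1 hk2
    have hGd1 : IsGreatest (genusSet (d-1) s) (genus h s) := by
      constructor
      · exact ⟨h, hOh, heh, rfl⟩
      · rintro g ⟨k, hk1, hk2, rfl⟩
        exact genus_le (d := d) (by omega) hOh heh hmax k hk1 hk2
    have e1 : M = genus (addE h imax) s := hM.unique hGd
    have e2 : M' = genus h s := hM'.unique hGd1
    rw [e1, e2, genus_addE hims]

/-- Let `d > s ≥ 3` and let `h` be the maximum, for the total order, of the
finite O-sequences of multiplicity `d-1` and length `s`. Then some `h + e_i` with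
`1 ≤ i ≤ s-1` is a finite O-sequence; for the largest such index `ı`, `h + e_ı` is the
maximum of the finite O-sequences of multiplicity `d` and length `s`, and the maximal genus
in multiplicity `d` equals the maximal genus in multiplicity `d-1` plus `ı - 1`. -/
theorem stmt8 (d s : ℕ) (h : ℕ → ℕ) (hs : 3 ≤ s) (hsd : s < d)
    (hOh : IsOSeq h s) (heh : mult h s = d - 1)
    (hmax : ∀ k : ℕ → ℕ, IsOSeq k s → mult k s = d - 1 → k ≠ h → oLT k h) :
    (∃ i, 1 ≤ i ∧ i ≤ s - 1 ∧ IsOSeq (addE h i) s) ∧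
    (∀ imax : ℕ, IsOSeq (addE h imax) s → (∀ j, imax < j → ¬ IsOSeq (addE h j) s) →
      (∀ k : ℕ → ℕ, IsOSeq k s → mult k s = d → k ≠ addE h imax → oLT k (addE h imax)) ∧
      (∀ M M' : ℕ, IsGreatest (genusSet d s) M → IsGreatest (genusSet (d - 1) s) M' →
        M = M' + (imax - 1))) := by
  exact stmt8_aux d s h hs hsd hOh heh hmax
end

section
/- For every d > 2 and every s with ⌊d/2⌋ + 1 ≤ s ≤ d, the maximum with respect to the total order < of the set of finite O-sequences of multiplicity d and length s is h_s(d) = (1, 2^{d-s}, 1^{2s-d-1}); consequently, the maximal genus of a finite O-sequence of multiplicity d and length s equals g_s(d) = C(s-1, 2) + C(d-s, 2). -/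
section Aux

lemma mac_zero' (t : ℕ) : mac t 0 = 0 := by cases t <;> simp [mac]

lemma mac_one' (t : ℕ) (ht : 1 ≤ t) : mac t 1 = 1 := by
  induction t with
  | zero => omega
  | succ t ih =>
    have hF : Nat.findGreatest (fun n => Nat.choose n (t+1) ≤ 1) (1 + t + 1) = t + 1 := by
      rw [Nat.findGreatest_eq_iff]
      refine ⟨by omega, fun _ => by simp, fun n hn hn' hP => ?_⟩
      have hn2 : n = t + 2 := by omega
      subst hn2
      rw [Nat.choose_succ_self_right] at hP
      omega
    show (if (1:ℕ) = 0 then 0 else _) = 1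
    rw [if_neg one_ne_zero, hF, Nat.choose_self, Nat.choose_self]
    simp [mac_zero']

lemma mac_two_ge (t : ℕ) (ht : 1 ≤ t) : 2 ≤ mac t 2 := by
  match t, ht with
  | 1, _ => decide
  | (t+2), _ =>
    have hF : Nat.findGreatest (fun n => Nat.choose n (t+2) ≤ 2) (2 + (t+1) + 1) = t + 2 := by
      rw [Nat.findGreatest_eq_iff]
      refine ⟨by omega, fun _ => by simp, fun n hn hn' hP => ?_⟩
      have h1 : Nat.choose (t+3) (t+2) ≤ Nat.choose n (t+2) :=
        Nat.choose_le_choose _ (by omega)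
      rw [Nat.choose_succ_self_right] at h1
      omega
    show 2 ≤ (if (2:ℕ) = 0 then 0 else _)
    rw [if_neg (by norm_num), hF, Nat.choose_self, Nat.choose_self, mac_one' (t+1) (by omega)]

lemma mac_le_one (t a : ℕ) (ht : 1 ≤ t) (ha : a ≤ 1) : mac t a ≤ 1 := by
  interval_cases a
  · simp [mac_zero']
  · simp [mac_one' t ht]

lemma sum_ite_lt (ℓ n : ℕ) : ∑ i ∈ Finset.range ℓ, (if i < n then 1 else 0) = min ℓ n := by
  induction ℓ with
  | zero => simp
  | succ ℓ ih => rw [Finset.sum_range_succ, ih]; split <;> omega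

lemma choose_two_succ (n : ℕ) : Nat.choose (n+1) 2 = Nat.choose n 2 + n := by
  have h := Nat.choose_succ_succ n 1
  rw [Nat.choose_one_right] at h
  norm_num at h
  omega

lemma sum_id_choose (n : ℕ) : ∑ i ∈ Finset.range n, i = Nat.choose n 2 := by
  induction n with
  | zero => simp
  | succ n ih => rw [Finset.sum_range_succ, ih, choose_two_succ]

lemma sum_pred (n : ℕ) : ∑ j ∈ Finset.range n, (j - 1) = Nat.choose (n-1) 2 := by
  cases n with
  | zero => simp
  | succ p =>
    rw [Finset.sum_range_succ']
    simp only [Nat.add_sub_cancel, Nat.zero_sub, add_zero, Nat.succ_sub_one]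
    exact sum_id_choose p

lemma choose_two_bound (p m : ℕ) : Nat.choose p 2 + (p-1)*m ≤ Nat.choose (p+m) 2 := by
  induction m with
  | zero => simp
  | succ m ih =>
    have h : Nat.choose (p+(m+1)) 2 = Nat.choose (p+m) 2 + (p+m) := by
      rw [← Nat.add_assoc, choose_two_succ]
    have h2 : (p-1)*(m+1) = (p-1)*m + (p-1) := by ring
    omega

variable {h : ℕ → ℕ} {s : ℕ}

lemma oseq_pos_s9 (hh : IsOSeq h s) {j : ℕ} (hj : j < s) : 1 ≤ h j := (hh.2.1 j).2 hj

lemma oseq_zero_s9 (hh : IsOSeq h s) {j : ℕ} (hj : s ≤ j) : h j = 0 := by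
  have := (hh.2.1 j).1
  omega

lemma oseq_step (hh : IsOSeq h s) {t : ℕ} (ht : 1 ≤ t) (h2 : 2 ≤ h (t+1)) : 2 ≤ h t := by
  by_contra hc
  have := hh.2.2 t ht
  have := mac_le_one t (h t) ht (by omega)
  omega

lemma oseq_two_le (hh : IsOSeq h s) : ∀ t, 2 ≤ h t → ∀ j, 1 ≤ j → j ≤ t → 2 ≤ h j := by
  intro t
  induction t with
  | zero => intro _ j hj hj'; omega
  | succ t ih =>
    intro h2 j hj hj'
    rcases Nat.eq_or_lt_of_le hj' with rfl | hlt
    · exact h2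
    · exact ih (oseq_step hh (by omega) h2) j hj (by omega)

/-- entries `1 ≤ j ≤ p := topIdx h s` are `≥ 2`, entries `p < j < s` equal `1`. -/
lemma topIdx_ge (hh : IsOSeq h s) {j : ℕ} (hj1 : 1 ≤ j) (hj2 : j ≤ topIdx h s) :
    2 ≤ h j := by
  have hP : 1 < h (topIdx h s) := by
    simp only [topIdx]
    exact Nat.findGreatest_of_ne_zero (P := fun j => 1 < h j) (n := s-1) rfl (by simp only [topIdx] at hj2; omega)
  exact oseq_two_le hh _ hP j hj1 hj2

lemma topIdx_after (hh : IsOSeq h s) {j : ℕ} (hj1 : topIdx h s < j) (hj2 : j < s) :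
    h j = 1 := by
  have h1 : 1 ≤ h j := oseq_pos_s9 hh hj2
  simp only [topIdx] at hj1
  have hs1 : 1 ≤ s := by omega
  have h2 : ¬ 1 < h j := Nat.findGreatest_is_greatest (P := fun j => 1 < h j) hj1 (by omega)
  omega

lemma topIdx_le (h : ℕ → ℕ) (s : ℕ) : topIdx h s ≤ s - 1 := Nat.findGreatest_le _

end Aux
section GenLe

lemma genus_le_bound {h : ℕ → ℕ} {s d : ℕ} (hs : 1 ≤ s) (hh : IsOSeq h s)
    (hd : mult h s = d) :
    genus h s ≤ Nat.choose (s-1) 2 + Nat.choose (d-s) 2 := by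
  obtain ⟨s', rfl⟩ : ∃ s', s = s' + 1 := ⟨s - 1, by omega⟩
  set p := topIdx h (s'+1) with hp
  have hps : p ≤ s' := by have := topIdx_le h (s'+1); omega
  have h0 : h 0 = 1 := hh.1
  set a : ℕ → ℕ := fun i => h (i+1) - 1 with ha
  have hpos : ∀ i, i < s' → 1 ≤ h (i+1) := fun i hi => oseq_pos_s9 hh (by omega)
  have hsum : ∑ i ∈ Finset.range s', h (i+1) + h 0 = d := by
    rw [← Finset.sum_range_succ']; exact hd
  have hA : ∑ i ∈ Finset.range s', a i = d - (s'+1) := by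
    have h1 : ∑ i ∈ Finset.range s', (a i + 1) = ∑ i ∈ Finset.range s', h (i+1) :=
      Finset.sum_congr rfl (fun i hi => by
        have := hpos i (Finset.mem_range.mp hi); simp only [ha]; omega)
    rw [Finset.sum_add_distrib, Finset.sum_const, smul_eq_mul, mul_one,
      Finset.card_range] at h1
    have hge : s' ≤ ∑ i ∈ Finset.range s', h (i+1) := by omega
    omega
  have hzero : ∀ i ∈ Finset.range s', i ∉ Finset.range p → a i = 0 := by
    intro i hi hni
    rw [Finset.mem_range] at hi
    rw [Finset.mem_range, not_lt] at hni
    have h1 : h (i+1) = 1 := topIdx_after hh (by omega) (by omega)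
    simp only [ha, h1]
  have hres : ∑ i ∈ Finset.range p, a i = d - (s'+1) := by
    rw [Finset.sum_subset (Finset.range_subset_range.2 hps) hzero]; exact hA
  have hage : ∀ i ∈ Finset.range p, 1 ≤ a i := by
    intro i hi
    rw [Finset.mem_range] at hi
    have := topIdx_ge hh (j := i+1) (by omega) (by omega)
    simp only [ha]; omega
  have hpn : p ≤ d - (s'+1) := by
    calc p = ∑ _i ∈ Finset.range p, 1 := by simp
    _ ≤ ∑ i ∈ Finset.range p, a i := Finset.sum_le_sum hage
    _ = d - (s'+1) := hres
  have hg : genus h (s'+1) = Nat.choose s' 2 + ∑ i ∈ Finset.range p, i * a i := by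
    show ∑ j ∈ Finset.range (s'+1), (j-1) * h j = _
    rw [Finset.sum_range_succ']
    simp only [Nat.add_sub_cancel, Nat.zero_sub, zero_mul, add_zero]
    have h1 : ∀ i ∈ Finset.range s', i * h (i+1) = i + i * a i := by
      intro i hi
      have h2 := hpos i (Finset.mem_range.mp hi)
      have h3 : h (i+1) = 1 + a i := by simp only [ha]; omega
      rw [h3]; ring
    rw [Finset.sum_congr rfl h1, Finset.sum_add_distrib, sum_id_choose]
    congr 1
    exact (Finset.sum_subset (Finset.range_subset_range.2 hps)
      (fun i hi hni => by rw [hzero i hi hni, mul_zero])).symm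
  have hT : ∑ i ∈ Finset.range p, i * a i ≤
      Nat.choose p 2 + (p-1) * ((d - (s'+1)) - p) := by
    have h1 : ∑ i ∈ Finset.range p, i * a i ≤
        ∑ i ∈ Finset.range p, (i + (p-1) * (a i - 1)) := by
      refine Finset.sum_le_sum (fun i hi => ?_)
      have h2 := hage i hi
      have h3 := Finset.mem_range.mp hi
      obtain ⟨c, hc⟩ : ∃ c, a i = c + 1 := ⟨a i - 1, by omega⟩
      rw [hc]
      simp only [Nat.add_sub_cancel]
      have h4 : i * c ≤ (p-1) * c := Nat.mul_le_mul_right c (by omega)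
      have h5 : i * (c+1) = i * c + i := by ring
      omega
    have h2 : ∑ i ∈ Finset.range p, (a i - 1) = (d - (s'+1)) - p := by
      have h3 : ∑ i ∈ Finset.range p, ((a i - 1) + 1) = ∑ i ∈ Finset.range p, a i :=
        Finset.sum_congr rfl (fun i hi => by have := hage i hi; omega)
      rw [Finset.sum_add_distrib, Finset.sum_const, smul_eq_mul, mul_one,
        Finset.card_range, hres] at h3
      omega
    rw [Finset.sum_add_distrib, ← Finset.mul_sum, sum_id_choose, h2] at h1
    exact h1
  have hfin : Nat.choose p 2 + (p-1) * ((d - (s'+1)) - p) ≤ Nat.choose (d - (s'+1)) 2 := by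
    have := choose_two_bound p ((d - (s'+1)) - p)
    have heq : p + ((d - (s'+1)) - p) = d - (s'+1) := by omega
    rw [heq] at this
    exact this
  rw [hg]
  have : (s' + 1 - 1) = s' := by omega
  rw [this]
  omega

end GenLe
section MaxS

variable {d s : ℕ}

lemma maxSeq_zero : maxSeq d s 0 = 1 := by simp [maxSeq]

lemma maxSeq_two {j : ℕ} (h1 : 1 ≤ j) (h2 : j ≤ d - s) : maxSeq d s j = 2 := by
  unfold maxSeq; rw [if_neg (by omega), if_pos h2]

lemma maxSeq_one {j : ℕ} (h1 : d - s < j) (h2 : j < s) : maxSeq d s j = 1 := by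
  unfold maxSeq; rw [if_neg (by omega), if_neg (by omega), if_pos h2]

lemma maxSeq_nil (hds : d - s < s) {j : ℕ} (hj : s ≤ j) : maxSeq d s j = 0 := by
  unfold maxSeq; rw [if_neg (by omega), if_neg (by omega), if_neg (by omega)]

lemma maxSeq_isOSeq (hd : 2 < d) (hs1 : d / 2 + 1 ≤ s) (hs2 : s ≤ d) :
    IsOSeq (maxSeq d s) s := by
  have hds : d - s ≤ s - 1 := by omega
  have hs0 : 2 ≤ s := by omega
  refine ⟨maxSeq_zero, fun i => ?_, fun t ht => ?_⟩
  · constructor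
    · intro hpos
      by_contra hc
      rw [maxSeq_nil (by omega) (by omega)] at hpos
      omega
    · intro hi
      rcases Nat.eq_zero_or_pos i with rfl | hip
      · rw [maxSeq_zero]; omega
      · by_cases hcase : i ≤ d - s
        · rw [maxSeq_two hip hcase]; omega
        · rw [maxSeq_one (by omega) hi]; omega
  · by_cases hts : t + 1 < s
    · have htval : maxSeq d s t = 2 ∨ maxSeq d s t = 1 := by
        by_cases hc : t ≤ d - s
        · exact Or.inl (maxSeq_two ht hc)
        · exact Or.inr (maxSeq_one (by omega) (by omega))
      by_cases hc2 : t + 1 ≤ d - s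
      · rw [maxSeq_two (by omega) hc2, maxSeq_two ht (by omega)]
        exact mac_two_ge t ht
      · rw [maxSeq_one (by omega) hts]
        rcases htval with hv | hv <;> rw [hv]
        · exact le_trans (by omega) (mac_two_ge t ht)
        · rw [mac_one' t ht]
    · rw [maxSeq_nil (by omega) (by omega)]
      exact Nat.zero_le _

lemma maxSeq_mult (hd : 2 < d) (hs1 : d / 2 + 1 ≤ s) (hs2 : s ≤ d) :
    mult (maxSeq d s) s = d := by
  have hds : d - s ≤ s - 1 := by omega
  obtain ⟨s', rfl⟩ : ∃ s', s = s' + 1 := ⟨s - 1, by omega⟩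
  show ∑ i ∈ Finset.range (s'+1), maxSeq d (s'+1) i = d
  rw [Finset.sum_range_succ', maxSeq_zero]
  have hterm : ∀ i ∈ Finset.range s',
      maxSeq d (s'+1) (i+1) = 1 + if i < d - (s'+1) then 1 else 0 := by
    intro i hi
    rw [Finset.mem_range] at hi
    by_cases hc : i < d - (s'+1)
    · rw [maxSeq_two (by omega) (by omega), if_pos hc]
    · rw [maxSeq_one (by omega) (by omega), if_neg hc]
  rw [Finset.sum_congr rfl hterm, Finset.sum_add_distrib, sum_ite_lt,
    Finset.sum_const, smul_eq_mul, mul_one, Finset.card_range]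
  omega

lemma maxSeq_genus (hd : 2 < d) (hs1 : d / 2 + 1 ≤ s) (hs2 : s ≤ d) :
    genus (maxSeq d s) s = Nat.choose (s-1) 2 + Nat.choose (d-s) 2 := by
  have hds : d - s ≤ s - 1 := by omega
  obtain ⟨s', rfl⟩ : ∃ s', s = s' + 1 := ⟨s - 1, by omega⟩
  show ∑ j ∈ Finset.range (s'+1), (j-1) * maxSeq d (s'+1) j = _
  rw [Finset.sum_range_succ']
  simp only [Nat.add_sub_cancel, Nat.zero_sub, zero_mul, add_zero, Nat.succ_sub_one]
  have hterm : ∀ i ∈ Finset.range s',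
      i * maxSeq d (s'+1) (i+1) = i + if i < d - (s'+1) then i else 0 := by
    intro i hi
    rw [Finset.mem_range] at hi
    by_cases hc : i < d - (s'+1)
    · rw [maxSeq_two (by omega) (by omega), if_pos hc]; ring
    · rw [maxSeq_one (by omega) (by omega), if_neg hc]; ring
  rw [Finset.sum_congr rfl hterm, Finset.sum_add_distrib, sum_id_choose]
  congr 1
  have hsub : Finset.range (d - (s'+1)) ⊆ Finset.range s' :=
    Finset.range_subset_range.2 (by omega)
  rw [← Finset.sum_subset hsub (fun i hi hni => by
    rw [Finset.mem_range, not_lt] at hni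
    rw [if_neg (by omega)])]
  rw [Finset.sum_congr rfl (fun i hi => if_pos (Finset.mem_range.mp hi)), sum_id_choose]

end MaxS
section OLT

lemma maxSeq_max {d s : ℕ} (hd : 2 < d) (hs1 : d / 2 + 1 ≤ s) (hs2 : s ≤ d)
    (k : ℕ → ℕ) (hk : IsOSeq k s) (hm : mult k s = d) (hne : k ≠ maxSeq d s) :
    oLT k (maxSeq d s) := by
  have hds : d - s ≤ s - 1 := by omega
  have hs0 : 2 ≤ s := by omega
  set m := maxSeq d s with hmdef
  have hmz : ∀ j, s ≤ j → m j = 0 := fun j hj => maxSeq_nil (by omega) hj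
  have hkz : ∀ j, s ≤ j → k j = 0 := fun j hj => oseq_zero_s9 hk hj
  -- the largest differing index
  obtain ⟨j0, hj0⟩ : ∃ j0, k j0 ≠ m j0 := Function.ne_iff.mp hne
  have hj0s : j0 < s := by
    by_contra hc
    rw [hkz j0 (by omega), hmz j0 (by omega)] at hj0
    exact hj0 rfl
  have hj0pos : 1 ≤ j0 := by
    rcases Nat.eq_zero_or_pos j0 with rfl | h
    · rw [hk.1, hmdef, maxSeq_zero] at hj0; exact absurd rfl hj0
    · omega
  set ℓ := Nat.findGreatest (fun j => k j ≠ m j) (s-1) with hldef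
  have hl1 : j0 ≤ ℓ := Nat.le_findGreatest (by omega) hj0
  have hlpos : 1 ≤ ℓ := le_trans hj0pos hl1
  have hls : ℓ ≤ s - 1 := Nat.findGreatest_le _
  have hlP : k ℓ ≠ m ℓ :=
    Nat.findGreatest_of_ne_zero (P := fun j => k j ≠ m j) (n := s-1) rfl (by omega)
  have htail : ∀ j, ℓ < j → k j = m j := by
    intro j hj
    by_cases hjs : j ≤ s - 1
    · by_contra hc
      exact Nat.findGreatest_is_greatest (P := fun j => k j ≠ m j) hj hjs hc
    · rw [hkz j (by omega), hmz j (by omega)]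
  refine ⟨ℓ, ?_, htail⟩
  -- suppose not
  by_contra hge'
  have hge : m ℓ < k ℓ := by omega
  -- partial sums agree
  have hkey : ∑ j ∈ Finset.range (ℓ+1), k j = ∑ j ∈ Finset.range (ℓ+1), m j := by
    have hmm : mult m s = d := maxSeq_mult hd hs1 hs2
    have hsplit : ∀ f : ℕ → ℕ, ∑ j ∈ Finset.range (ℓ+1), f j +
        ∑ j ∈ Finset.Ico (ℓ+1) s, f j = ∑ j ∈ Finset.range s, f j := by
      intro f
      rw [Finset.range_eq_Ico, Finset.range_eq_Ico]
      exact Finset.sum_Ico_consecutive f (m := 0) (n := ℓ+1) (k := s) (by omega) (by omega)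
    have htl : ∑ j ∈ Finset.Ico (ℓ+1) s, k j = ∑ j ∈ Finset.Ico (ℓ+1) s, m j :=
      Finset.sum_congr rfl (fun j hj => htail j (by
        rw [Finset.mem_Ico] at hj; omega))
    have h1 := hsplit k
    have h2 := hsplit m
    rw [show (∑ j ∈ Finset.range s, k j) = d from hm] at h1
    rw [show (∑ j ∈ Finset.range s, m j) = d from hmm] at h2
    omega
  -- k is ≥ 2 up to ℓ
  have hkl2 : 2 ≤ k ℓ := by
    have : 1 ≤ m ℓ := by
      by_cases hc : ℓ ≤ d - s
      · rw [hmdef, maxSeq_two hlpos hc]; omega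
      · rw [hmdef, maxSeq_one (by omega) (by omega)]
    omega
  have hk2 : ∀ j, 1 ≤ j → j ≤ ℓ → 2 ≤ k j := oseq_two_le hk ℓ hkl2
  by_cases hcase : ℓ ≤ d - s
  · -- m-sum is 1 + 2ℓ, k-sum ≥ 2ℓ + 2
    have hmsum : ∑ j ∈ Finset.range (ℓ+1), m j = 1 + 2*ℓ := by
      rw [Finset.sum_range_succ', hmdef, maxSeq_zero]
      rw [Finset.sum_congr rfl (fun i hi =>
        maxSeq_two (d := d) (s := s) (j := i+1) (by omega)
          (by rw [Finset.mem_range] at hi; omega))]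
      rw [Finset.sum_const, smul_eq_mul, Finset.card_range]
      omega
    have hksum : 2*ℓ + 2 ≤ ∑ j ∈ Finset.range (ℓ+1), k j := by
      rw [Finset.sum_range_succ]
      have hkl3 : 3 ≤ k ℓ := by
        have : m ℓ = 2 := maxSeq_two hlpos hcase
        omega
      have hlow : 2*ℓ - 1 ≤ ∑ j ∈ Finset.range ℓ, k j := by
        obtain ⟨ℓ', hℓ'⟩ : ∃ ℓ', ℓ = ℓ' + 1 := ⟨ℓ - 1, by omega⟩
        rw [hℓ', Finset.sum_range_succ', hk.1]
        have : ∑ i ∈ Finset.range ℓ', 2 ≤ ∑ i ∈ Finset.range ℓ', k (i+1) :=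
          Finset.sum_le_sum (fun i hi => hk2 (i+1) (by omega)
            (by rw [Finset.mem_range] at hi; omega))
        rw [Finset.sum_const, smul_eq_mul, Finset.card_range] at this
        omega
      omega
    omega
  · -- d - s < ℓ : m-sum ≤ 1 + ℓ + (d-s), k-sum ≥ 1 + 2ℓ
    have hmsum : ∑ j ∈ Finset.range (ℓ+1), m j ≤ 1 + ℓ + (d - s) := by
      rw [Finset.sum_range_succ', hmdef, maxSeq_zero]
      have hb : ∑ i ∈ Finset.range ℓ, maxSeq d s (i+1) ≤
          ∑ i ∈ Finset.range ℓ, (1 + if i < d - s then 1 else 0) := by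
        refine Finset.sum_le_sum (fun i hi => ?_)
        rw [Finset.mem_range] at hi
        by_cases hc : i < d - s
        · rw [maxSeq_two (by omega) (by omega), if_pos hc]
        · rw [maxSeq_one (by omega) (by omega), if_neg hc]
      rw [Finset.sum_add_distrib, sum_ite_lt, Finset.sum_const, smul_eq_mul,
        mul_one, Finset.card_range] at hb
      omega
    have hksum : 1 + 2*ℓ ≤ ∑ j ∈ Finset.range (ℓ+1), k j := by
      rw [Finset.sum_range_succ', hk.1]
      have : ∑ i ∈ Finset.range ℓ, 2 ≤ ∑ i ∈ Finset.range ℓ, k (i+1) :=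
        Finset.sum_le_sum (fun i hi => hk2 (i+1) (by omega)
          (by rw [Finset.mem_range] at hi; omega))
      rw [Finset.sum_const, smul_eq_mul, Finset.card_range] at this
      omega
    omega

end OLT
/-- For every `d > 2` and every `s` with `⌊d/2⌋ + 1 ≤ s ≤ d`, the maximum
with respect to the total order of the finite O-sequences of multiplicity `d` and length `s`
is `(1, 2^{d-s}, 1^{2s-d-1})`; consequently the maximal genus of a finite O-sequence of
multiplicity `d` and length `s` equals `C(s-1,2) + C(d-s,2)`. -/
theorem stmt9 (d s : ℕ) (hd : 2 < d) (hs1 : d / 2 + 1 ≤ s) (hs2 : s ≤ d) :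
    IsOSeq (maxSeq d s) s ∧ mult (maxSeq d s) s = d ∧
    (∀ k : ℕ → ℕ, IsOSeq k s → mult k s = d → k ≠ maxSeq d s → oLT k (maxSeq d s)) ∧
    genus (maxSeq d s) s = Nat.choose (s - 1) 2 + Nat.choose (d - s) 2 ∧
    IsGreatest (genusSet d s) (Nat.choose (s - 1) 2 + Nat.choose (d - s) 2) := by
  refine ⟨maxSeq_isOSeq hd hs1 hs2, maxSeq_mult hd hs1 hs2,
    fun k hk hm hne => maxSeq_max hd hs1 hs2 k hk hm hne,
    maxSeq_genus hd hs1 hs2,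
    ⟨⟨maxSeq d s, maxSeq_isOSeq hd hs1 hs2, maxSeq_mult hd hs1 hs2,
      maxSeq_genus hd hs1 hs2⟩, ?_⟩⟩
  rintro g ⟨h, hh, hm, rfl⟩
  exact genus_le_bound (by omega) hh hm
end
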